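/- (Stesin) Let N, m ∈ ℕ with N > m, let 1 ≤ q < p ≤ ∞, and let w = (w_i)_{i=1}^N be a vector of positive weights. Then the Kolmogorov m-width of the weighted ball B^p_N(w) in ℓ^q_N satisfies d_m(B^p_N(w), ℓ^q_N) = ( max_{i_1,…,i_{N−m} ∈ [N] pairwise distinct} ( ∑_{j=1}^{N−m} w_{i_j}^{pq/(p−q)} )^{1/p − 1/q} )^{−1}, where for p = ∞ the exponents are interpreted as pq/(p−q) = q and 1/p − 1/q = −1/q, so that the right-hand side equals the minimum over subsets T ⊆ [N] of cardinality N−m of (∑_{i∈T} w_i^q)^{1/q}. -/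

import Mathlib

set_option maxHeartbeats 1000000


open Finset
open scoped ENNReal

noncomputable section

/-- The weighted `ℓ^p` (quasi-)norm on `ℝ^N` with positive weights `w` and exponent
`p ∈ (0,∞]`: `‖x‖_{p,w} = (∑ i, (|x i| / w i)^p)^(1/p)` for `p < ∞`, and
`sup_i |x i| / w i` for `p = ∞`. -/
def wnorm {N : ℕ} (p : ℝ≥0∞) (w : Fin N → ℝ) (x : Fin N → ℝ) : ℝ :=
  if p = ⊤ then ⨆ i, |x i| / w i
  else (∑ i, (|x i| / w i) ^ p.toReal) ^ (1 / p.toReal)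

/-- The weighted `ℓ^p` unit ball `B^p_N(w)` in `ℝ^N`. -/
def wball {N : ℕ} (p : ℝ≥0∞) (w : Fin N → ℝ) : Set (Fin N → ℝ) :=
  {x | wnorm p w x ≤ 1}

/-- The Kolmogorov `m`-width of a subset `K` of `ℝ^N` equipped with the norm `nrm`. -/
def kolWidth {N : ℕ} (m : ℕ) (K : Set (Fin N → ℝ)) (nrm : (Fin N → ℝ) → ℝ) : ℝ :=
  sInf { r | ∃ X : Submodule ℝ (Fin N → ℝ), Module.finrank ℝ X ≤ m ∧
    r = ⨆ x : K, ⨅ z : X, nrm ((x : Fin N → ℝ) - (z : Fin N → ℝ)) }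

namespace StesinAux

variable {N : ℕ}


/-- Extreme point lemma: a subspace of dimension ≥ k meets the box `∏ [-μ i, μ i]`
in a point having at least `k` coordinates on the boundary. -/
theorem exists_tight (Y : Submodule ℝ (Fin N → ℝ)) (k : ℕ) (hk : k ≤ Module.finrank ℝ Y)
    (μ : Fin N → ℝ) (hμ : ∀ i, 0 < μ i) :
    ∃ u, u ∈ Y ∧ (∀ i, |u i| ≤ μ i) ∧
      ∃ T : Finset (Fin N), T.card = k ∧ ∀ i ∈ T, |u i| = μ i := by
  classical
  set P : ℕ → Prop := fun n => ∃ u, u ∈ Y ∧ (∀ i, |u i| ≤ μ i) ∧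
      n ≤ #(univ.filter fun i => |u i| = μ i) with hPdef
  have hP0 : P 0 := ⟨0, Y.zero_mem, fun i => by simpa using (hμ i).le, Nat.zero_le _⟩
  have hPM : P (Nat.findGreatest P N) := Nat.findGreatest_spec (Nat.zero_le N) hP0
  obtain ⟨u, huY, hub, hcount⟩ := hPM
  set M := Nat.findGreatest P N with hMdef
  set S : Finset (Fin N) := univ.filter fun i => |u i| = μ i with hSdef
  have hSN : S.card ≤ N := le_trans (card_le_univ S) (by simp)
  have hSle : S.card ≤ M := by
    by_contra h
    push_neg at h
    exact Nat.findGreatest_is_greatest h hSN ⟨u, huY, hub, le_refl _⟩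
  -- main claim : k ≤ S.card
  have hkS : k ≤ S.card := by
    by_contra hlt
    push_neg at hlt
    -- the restriction map to the tight coordinates
    set ρ : Y →ₗ[ℝ] (↥S → ℝ) :=
      LinearMap.pi (fun i : ↥S => (LinearMap.proj (i : Fin N)).comp Y.subtype) with hρdef
    have h1 := LinearMap.finrank_range_add_finrank_ker ρ
    have h2 : Module.finrank ℝ (LinearMap.range ρ) ≤ S.card := by
      refine le_trans (Submodule.finrank_le _) ?_
      rw [Module.finrank_fintype_fun_eq_card, Fintype.card_coe]
    have hkerpos : 0 < Module.finrank ℝ (LinearMap.ker ρ) := by omega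
    have : Nontrivial (LinearMap.ker ρ) := Module.finrank_pos_iff.mp hkerpos
    obtain ⟨v', hv'⟩ := exists_ne (0 : LinearMap.ker ρ)
    set v : Fin N → ℝ := ((v' : Y) : Fin N → ℝ) with hvdef
    have hvY : v ∈ Y := (v' : Y).2
    have hvS : ∀ i ∈ S, v i = 0 := by
      intro i hi
      have h0 : ρ (v' : Y) = 0 := v'.2
      have := congrFun h0 ⟨i, hi⟩
      simpa [hρdef] using this
    have hvne : v ≠ 0 := by
      intro h
      apply hv'
      have : (v' : Y) = 0 := by
        apply Subtype.ext
        exact h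
      exact Subtype.ext this
    set I : Finset (Fin N) := univ.filter fun i => v i ≠ 0 with hIdef
    have hIne : I.Nonempty := by
      obtain ⟨i, hi⟩ := Function.ne_iff.mp hvne
      refine ⟨i, ?_⟩
      simp only [hIdef, mem_filter, mem_univ, true_and]
      simpa using hi
    have hIS : ∀ i ∈ I, i ∉ S := by
      intro i hi hiS
      have := hvS i hiS
      simp [hIdef] at hi
      exact hi this
    have hstrict : ∀ i ∈ I, |u i| < μ i := by
      intro i hi
      refine lt_of_le_of_ne (hub i) ?_
      have := hIS i hi
      simpa [hSdef] using this
    set τ : Fin N → ℝ := fun i => if 0 < v i then (μ i - u i) / v i else (μ i + u i) / (- v i)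
      with hτdef
    have hτpos : ∀ i ∈ I, 0 < τ i := by
      intro i hi
      have habs := hstrict i hi
      have hvi : v i ≠ 0 := by simpa [hIdef] using hi
      rcases lt_trichotomy (v i) 0 with hneg | h0 | hpos
      · have : ¬ (0 < v i) := by linarith
        rw [hτdef]
        simp only [this, if_false]
        apply div_pos
        · have := neg_abs_le (u i); linarith [habs]
        · linarith
      · exact absurd h0 hvi
      · rw [hτdef]
        simp only [hpos, if_true]
        apply div_pos
        · have := le_abs_self (u i); linarith [habs]
        · exact hpos
    obtain ⟨i₀, hi₀I, hi₀min⟩ := I.exists_min_image τ hIne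
    set t := τ i₀ with htdef
    have ht0 : 0 < t := hτpos i₀ hi₀I
    set u2 : Fin N → ℝ := u + t • v with hu2def
    have hu2Y : u2 ∈ Y := Y.add_mem huY (Y.smul_mem _ hvY)
    have hu2b : ∀ i, |u2 i| ≤ μ i := by
      intro i
      by_cases hvi : v i = 0
      · simpa [hu2def, hvi] using hub i
      · have hiI : i ∈ I := by simp [hIdef, hvi]
        have htτ : t ≤ τ i := hi₀min i hiI
        have habs := hstrict i hiI
        have h1 : - μ i ≤ u i := by have := neg_abs_le (u i); linarith
        have h2 : u i ≤ μ i := by have := le_abs_self (u i); linarith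
        rcases lt_trichotomy (v i) 0 with hneg | h0 | hpos
        · have hτi : τ i = (μ i + u i) / (- v i) := by
            rw [hτdef]; simp only [show ¬ (0 < v i) by linarith, if_false]
          have hτv : τ i * v i = - (μ i + u i) := by
            rw [hτi, div_mul_eq_mul_div, div_neg, mul_div_cancel_right₀ _ hvi]
          have htv : τ i * v i ≤ t * v i := by
            apply mul_le_mul_of_nonpos_right htτ (le_of_lt hneg)
          have htv0 : t * v i ≤ 0 := mul_nonpos_of_nonneg_of_nonpos ht0.le hneg.le
          rw [abs_le]
          constructor
          · simp only [hu2def, Pi.add_apply, Pi.smul_apply, smul_eq_mul]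
            linarith
          · simp only [hu2def, Pi.add_apply, Pi.smul_apply, smul_eq_mul]
            linarith
        · exact absurd h0 hvi
        · have hτi : τ i = (μ i - u i) / v i := by
            rw [hτdef]; simp only [hpos, if_true]
          have hτv : τ i * v i = μ i - u i := by
            rw [hτi]; field_simp
          have htv : t * v i ≤ τ i * v i := by
            apply mul_le_mul_of_nonneg_right htτ (le_of_lt hpos)
          have htv0 : 0 ≤ t * v i := mul_nonneg ht0.le hpos.le
          rw [abs_le]
          constructor
          · simp only [hu2def, Pi.add_apply, Pi.smul_apply, smul_eq_mul]
            linarith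
          · simp only [hu2def, Pi.add_apply, Pi.smul_apply, smul_eq_mul]
            linarith
    have hi₀tight : |u2 i₀| = μ i₀ := by
      have hvi : v i₀ ≠ 0 := by simpa [hIdef] using hi₀I
      rcases lt_trichotomy (v i₀) 0 with hneg | h0 | hpos
      · have hτi : t = (μ i₀ + u i₀) / (- v i₀) := by
          rw [htdef, hτdef]; simp only [show ¬ (0 < v i₀) by linarith, if_false]
        have hne : v i₀ ≠ 0 := hvi
        have : u2 i₀ = - μ i₀ := by
          simp only [hu2def, Pi.add_apply, Pi.smul_apply, smul_eq_mul, hτi]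
          rw [div_mul_eq_mul_div, div_neg, mul_div_cancel_right₀ _ hne]
          ring
        rw [this, abs_neg, abs_of_pos (hμ i₀)]
      · exact absurd h0 hvi
      · have hτi : t = (μ i₀ - u i₀) / v i₀ := by
          rw [htdef, hτdef]; simp only [hpos, if_true]
        have hne : v i₀ ≠ 0 := hvi
        have : u2 i₀ = μ i₀ := by
          simp only [hu2def, Pi.add_apply, Pi.smul_apply, smul_eq_mul, hτi]
          field_simp
          ring
        rw [this, abs_of_pos (hμ i₀)]
    have hsubset : insert i₀ S ⊆ univ.filter fun i => |u2 i| = μ i := by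
      intro i hi
      rcases Finset.mem_insert.mp hi with rfl | hiS
      · simp [hi₀tight]
      · have hvi : v i = 0 := hvS i hiS
        have : u2 i = u i := by simp [hu2def, hvi]
        simp only [mem_filter, mem_univ, true_and, this]
        simpa [hSdef] using hiS
    have hcard2 : S.card + 1 ≤ #(univ.filter fun i => |u2 i| = μ i) := by
      have := Finset.card_le_card hsubset
      rwa [Finset.card_insert_of_notMem (hIS i₀ hi₀I)] at this
    have hP2 : P (S.card + 1) := ⟨u2, hu2Y, hu2b, hcard2⟩
    have hle : S.card + 1 ≤ N := by
      refine le_trans hcard2 (le_trans (card_le_univ _) (by simp))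
    exact Nat.findGreatest_is_greatest (by omega) hle hP2
  obtain ⟨T, hTS, hTcard⟩ := Finset.exists_subset_card_eq hkS
  refine ⟨u, huY, hub, T, hTcard, fun i hi => ?_⟩
  have := hTS hi
  simpa [hSdef] using this



theorem exists_perp {m : ℕ} (X : Submodule ℝ (Fin N → ℝ)) (hX : Module.finrank ℝ X ≤ m) :
    ∃ Y : Submodule ℝ (Fin N → ℝ), N - m ≤ Module.finrank ℝ Y ∧
      ∀ u ∈ Y, ∀ z ∈ X, ∑ i, u i * z i = 0 := by
  classical
  set d := Module.finrank ℝ X with hd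
  let b : Module.Basis (Fin d) ℝ X := Module.finBasis ℝ X
  let G : (Fin N → ℝ) →ₗ[ℝ] (Fin d → ℝ) :=
    LinearMap.pi (fun j => ∑ i, ((b j : Fin N → ℝ) i) • LinearMap.proj i)
  refine ⟨LinearMap.ker G, ?_, ?_⟩
  · have h1 := LinearMap.finrank_range_add_finrank_ker G
    have h2 : Module.finrank ℝ (LinearMap.range G) ≤ d := by
      refine le_trans (Submodule.finrank_le _) ?_
      rw [Module.finrank_fintype_fun_eq_card, Fintype.card_fin]
    have h3 : Module.finrank ℝ (Fin N → ℝ) = N := by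
      rw [Module.finrank_fintype_fun_eq_card, Fintype.card_fin]
    rw [h3] at h1
    omega
  · intro u hu z hz
    have hbj : ∀ j, ∑ i, u i * (b j : Fin N → ℝ) i = 0 := by
      intro j
      have h0 : G u = 0 := LinearMap.mem_ker.mp hu
      have h1 := congrFun h0 j
      have h2 : G u j = ∑ i, (b j : Fin N → ℝ) i * u i := by
        simp [G, LinearMap.pi_apply, LinearMap.sum_apply, LinearMap.smul_apply,
          LinearMap.proj_apply, smul_eq_mul]
      rw [h2] at h1
      rw [show (0:Fin d → ℝ) j = 0 from rfl] at h1
      rw [← h1]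
      exact Finset.sum_congr rfl fun i _ => mul_comm _ _
    have hc : (z : Fin N → ℝ) = fun i => ∑ j, (b.repr ⟨z, hz⟩) j * ((b j : Fin N → ℝ) i) := by
      have hrepr := Module.Basis.sum_repr b ⟨z, hz⟩
      have h4 := congrArg (X.subtype) hrepr
      rw [map_sum] at h4
      funext i
      have h5 := congrFun h4 i
      simp only [Submodule.coe_subtype, map_smul] at h5
      rw [← h5]
      simp [Finset.sum_apply, smul_eq_mul]
    set c : Fin d → ℝ := fun j => (b.repr ⟨z, hz⟩) j with hcdef
    calc ∑ i, u i * z i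
        = ∑ i, ∑ j, c j * (u i * (b j : Fin N → ℝ) i) := by
          refine Finset.sum_congr rfl fun i _ => ?_
          rw [show z i = ∑ j, c j * ((b j : Fin N → ℝ) i) from congrFun hc i]
          rw [Finset.mul_sum]
          exact Finset.sum_congr rfl fun j _ => by ring
      _ = ∑ j, ∑ i, c j * (u i * (b j : Fin N → ℝ) i) := Finset.sum_comm
      _ = ∑ j, c j * ∑ i, u i * (b j : Fin N → ℝ) i := by
          refine Finset.sum_congr rfl fun j _ => (Finset.mul_sum _ _ _).symm
      _ = 0 := by
          refine Finset.sum_eq_zero fun j _ => ?_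
          rw [hbj j, mul_zero]



/-- The key sharp inequality: if `u` lies in the box with profile `μ i = w i ^ (rr/q')`
and is tight on a set `T` with `∑_{T} w^rr ≥ A₀`, then
`A₀^(1/rr) ‖u‖_{q'} ≤ ‖w·u‖_{p'}`. -/
theorem key_ineq (w u : Fin N → ℝ) (hw : ∀ i, 0 < w i)
    (p' q' rr A₀ : ℝ) (hp1 : 1 ≤ p') (hpq : p' ≤ q') (hrr : 0 < rr)
    (hinv : 1 / p' - 1 / q' = 1 / rr)
    (hub : ∀ i, |u i| ≤ w i ^ (rr / q'))
    (T : Finset (Fin N)) (htight : ∀ i ∈ T, |u i| = w i ^ (rr / q'))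
    (hA₀ : 0 ≤ A₀) (hAT : A₀ ≤ ∑ i ∈ T, w i ^ rr) :
    A₀ ^ (1 / rr) * (∑ i, |u i| ^ q') ^ (1 / q') ≤ (∑ i, (w i * |u i|) ^ p') ^ (1 / p') := by
  have hp0 : 0 < p' := lt_of_lt_of_le zero_lt_one hp1
  have hq0 : 0 < q' := lt_of_lt_of_le hp0 hpq
  set μ : Fin N → ℝ := fun i => w i ^ (rr / q') with hμdef
  have hμpos : ∀ i, 0 < μ i := fun i => Real.rpow_pos_of_pos (hw i) _
  set s : Fin N → ℝ := fun i => |u i| / μ i with hsdef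
  have hs0 : ∀ i, 0 ≤ s i := fun i => div_nonneg (abs_nonneg _) (hμpos i).le
  have hs1 : ∀ i, s i ≤ 1 := fun i => (div_le_one (hμpos i)).mpr (hub i)
  have hu_eq : ∀ i, |u i| = μ i * s i := by
    intro i
    have hne : μ i ≠ 0 := ne_of_gt (hμpos i)
    simp only [hsdef]
    rw [mul_comm, div_mul_cancel₀ _ hne]
  have hμq : ∀ i, μ i ^ q' = w i ^ rr := by
    intro i
    rw [hμdef, ← Real.rpow_mul (hw i).le, div_mul_cancel₀ _ (ne_of_gt hq0)]
  have hwexp : ∀ i, (w i * μ i) ^ p' = w i ^ rr := by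
    intro i
    have h1 : w i * μ i = w i ^ (1 + rr / q') := by
      rw [Real.rpow_add (hw i), Real.rpow_one, hμdef]
    rw [h1, ← Real.rpow_mul (hw i).le]
    congr 1
    have hp'ne : p' ≠ 0 := ne_of_gt hp0
    have hq'ne : q' ≠ 0 := ne_of_gt hq0
    have hrrne : rr ≠ 0 := ne_of_gt hrr
    field_simp at hinv ⊢
    nlinarith [hinv]
  -- identities for the two sums
  have hid1 : ∀ i, (w i * |u i|) ^ p' = w i ^ rr * s i ^ p' := by
    intro i
    rw [hu_eq i, ← mul_assoc, Real.mul_rpow (mul_nonneg (hw i).le (hμpos i).le) (hs0 i), hwexp i]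
  have hid2 : ∀ i, |u i| ^ q' = w i ^ rr * s i ^ q' := by
    intro i
    rw [hu_eq i, Real.mul_rpow (hμpos i).le (hs0 i), hμq i]
  set B := ∑ i, (w i * |u i|) ^ p' with hBdef
  set E := ∑ i, |u i| ^ q' with hEdef
  have hB0 : 0 ≤ B := Finset.sum_nonneg fun i _ =>
    Real.rpow_nonneg (mul_nonneg (hw i).le (abs_nonneg _)) _
  have hE0 : 0 ≤ E := Finset.sum_nonneg fun i _ => Real.rpow_nonneg (abs_nonneg _) _
  have hEB : E ≤ B := by
    rw [hBdef, hEdef]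
    refine Finset.sum_le_sum fun i _ => ?_
    rw [hid1 i, hid2 i]
    refine mul_le_mul_of_nonneg_left ?_ (Real.rpow_nonneg (hw i).le _)
    by_cases hsi : s i = 0
    · rw [hsi, Real.zero_rpow (ne_of_gt hq0), Real.zero_rpow (ne_of_gt hp0)]
    · exact Real.rpow_le_rpow_of_exponent_ge (lt_of_le_of_ne (hs0 i) (Ne.symm hsi)) (hs1 i) hpq
  have hAB : A₀ ≤ B := by
    refine le_trans hAT ?_
    rw [hBdef]
    refine le_trans ?_ (Finset.sum_le_sum_of_subset_of_nonneg (Finset.subset_univ T)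
      (fun i _ _ => Real.rpow_nonneg (mul_nonneg (hw i).le (abs_nonneg _)) _))
    refine Finset.sum_le_sum fun i hi => ?_
    rw [hid1 i]
    have hsi : s i = 1 := by
      simp only [hsdef]
      rw [htight i hi]
      exact div_self (ne_of_gt (hμpos i))
    rw [hsi, Real.one_rpow, mul_one]
  -- conclude
  by_cases hE : E = 0
  · rw [hE, Real.zero_rpow (by positivity)]
    rw [mul_zero]
    positivity
  have hEpos : 0 < E := lt_of_le_of_ne hE0 (Ne.symm hE)
  have hBpos : 0 < B := lt_of_lt_of_le hEpos hEB
  by_cases hA : A₀ = 0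
  · rw [hA, Real.zero_rpow (by positivity), zero_mul]
    positivity
  have hApos : 0 < A₀ := lt_of_le_of_ne hA₀ (Ne.symm hA)
  have step1 : A₀ ^ (q' - p') * E ^ p' ≤ B ^ q' := by
    have h1 : A₀ ^ (q' - p') ≤ B ^ (q' - p') :=
      Real.rpow_le_rpow hA₀ hAB (by linarith)
    have h2 : E ^ p' ≤ B ^ p' := Real.rpow_le_rpow hE0 hEB (le_of_lt hp0)
    have h3 : B ^ (q' - p') * B ^ p' = B ^ q' := by
      rw [← Real.rpow_add hBpos]
      ring_nf
    calc A₀ ^ (q' - p') * E ^ p' ≤ B ^ (q' - p') * B ^ p' := by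
          exact mul_le_mul h1 h2 (by positivity) (by positivity)
      _ = B ^ q' := h3
  have step2 : (A₀ ^ (q' - p') * E ^ p') ^ (1 / (p' * q')) ≤ (B ^ q') ^ (1 / (p' * q')) :=
    Real.rpow_le_rpow (by positivity) step1 (by positivity)
  have hrhs : (B ^ q') ^ (1 / (p' * q')) = B ^ (1 / p') := by
    rw [← Real.rpow_mul hBpos.le]
    congr 1
    field_simp
    try ring
  have hlhs : (A₀ ^ (q' - p') * E ^ p') ^ (1 / (p' * q')) = A₀ ^ (1 / rr) * E ^ (1 / q') := by
    rw [Real.mul_rpow (by positivity) (by positivity), ← Real.rpow_mul hApos.le,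
      ← Real.rpow_mul hEpos.le]
    congr 2
    · rw [← hinv]
      field_simp
      try ring
    · field_simp
      try ring
  rw [hrhs, hlhs] at step2
  exact step2



theorem pair_le (qr q' : ℝ) (hq : 1 < qr) (hq' : q' = qr / (qr - 1)) (y u : Fin N → ℝ) :
    ∑ i, y i * u i ≤ (∑ i, |y i| ^ qr) ^ (1 / qr) * (∑ i, |u i| ^ q') ^ (1 / q') := by
  refine Real.inner_le_Lp_mul_Lq univ y u ?_
  rw [Real.holderConjugate_iff]
  constructor
  · exact hq
  · rw [hq']
    have h1 : qr ≠ 0 := by linarith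
    have h2 : qr - 1 ≠ 0 := by intro h; apply h1; linarith
    field_simp
    ring

theorem pair_le_inf (y u : Fin N → ℝ) (hN : (univ : Finset (Fin N)).Nonempty) :
    ∑ i, y i * u i ≤ (∑ i, |y i|) * univ.sup' hN (fun i => |u i|) := by
  calc ∑ i, y i * u i ≤ ∑ i, |y i| * |u i| := by
        refine Finset.sum_le_sum fun i _ => ?_
        rw [← abs_mul]
        exact le_abs_self _
    _ ≤ ∑ i, |y i| * univ.sup' hN (fun i => |u i|) := by
        refine Finset.sum_le_sum fun i _ => ?_
        exact mul_le_mul_of_nonneg_left (Finset.le_sup' (fun j => |u j|) (mem_univ i)) (abs_nonneg _)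
    _ = (∑ i, |y i|) * univ.sup' hN (fun i => |u i|) := (Finset.sum_mul _ _ _).symm

theorem upper_holder (w x : Fin N → ℝ) (hw : ∀ i, 0 < w i) (pr qr : ℝ) (hq1 : 1 ≤ qr)
    (hpq : qr < pr) (hx : ∑ i, (|x i| / w i) ^ pr ≤ 1) (T : Finset (Fin N)) :
    ∑ i ∈ T, |x i| ^ qr ≤ (∑ i ∈ T, w i ^ (pr * qr / (pr - qr))) ^ ((pr - qr) / pr) := by
  have hq0 : 0 < qr := lt_of_lt_of_le zero_lt_one hq1
  have hp0 : 0 < pr := lt_trans hq0 hpq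
  set s1 : ℝ := pr / qr with hs1
  set s2 : ℝ := pr / (pr - qr) with hs2
  have hs1gt : 1 < s1 := (one_lt_div hq0).mpr hpq
  have hconj : Real.HolderConjugate s1 s2 := by
    rw [Real.holderConjugate_iff]
    constructor
    · exact hs1gt
    · rw [hs1, hs2]
      field_simp
      try ring
  have key := Real.inner_le_Lp_mul_Lq_of_nonneg (s := T) hconj
    (f := fun i => (|x i| / w i) ^ qr) (g := fun i => w i ^ qr)
    (fun i _ => Real.rpow_nonneg (div_nonneg (abs_nonneg _) (hw i).le) _)
    (fun i _ => Real.rpow_nonneg (hw i).le _)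
  have h1 : ∀ i, (|x i| / w i) ^ qr * w i ^ qr = |x i| ^ qr := by
    intro i
    rw [← Real.mul_rpow (div_nonneg (abs_nonneg _) (hw i).le) (hw i).le,
      div_mul_cancel₀ _ (ne_of_gt (hw i))]
  have h2 : ∀ i, ((|x i| / w i) ^ qr) ^ s1 = (|x i| / w i) ^ pr := by
    intro i
    rw [← Real.rpow_mul (div_nonneg (abs_nonneg _) (hw i).le)]
    congr 1
    rw [hs1]
    field_simp
  have h3 : ∀ i, (w i ^ qr) ^ s2 = w i ^ (pr * qr / (pr - qr)) := by
    intro i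
    rw [← Real.rpow_mul (hw i).le]
    congr 1
    rw [hs2]
    field_simp
  rw [show ∑ i ∈ T, |x i| ^ qr = ∑ i ∈ T, (|x i| / w i) ^ qr * w i ^ qr from
    Finset.sum_congr rfl fun i _ => (h1 i).symm]
  refine le_trans key ?_
  rw [show ∑ i ∈ T, ((|x i| / w i) ^ qr) ^ s1 = ∑ i ∈ T, (|x i| / w i) ^ pr from
    Finset.sum_congr rfl fun i _ => h2 i,
    show ∑ i ∈ T, (w i ^ qr) ^ s2 = ∑ i ∈ T, w i ^ (pr * qr / (pr - qr)) from
    Finset.sum_congr rfl fun i _ => h3 i]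
  have hT1 : ∑ i ∈ T, (|x i| / w i) ^ pr ≤ 1 := by
    refine le_trans ?_ hx
    exact Finset.sum_le_sum_of_subset_of_nonneg (Finset.subset_univ T)
      (fun i _ _ => Real.rpow_nonneg (div_nonneg (abs_nonneg _) (hw i).le) _)
  have hT1' : (∑ i ∈ T, (|x i| / w i) ^ pr) ^ (1 / s1) ≤ 1 := by
    refine Real.rpow_le_one (Finset.sum_nonneg fun i _ =>
      Real.rpow_nonneg (div_nonneg (abs_nonneg _) (hw i).le) _) hT1 (by positivity)
  have hrw : (1 : ℝ) / s2 = (pr - qr) / pr := by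
    rw [hs2]
    field_simp
  rw [← hrw]
  calc (∑ i ∈ T, (|x i| / w i) ^ pr) ^ (1 / s1) * (∑ i ∈ T, w i ^ (pr * qr / (pr - qr))) ^ (1 / s2)
      ≤ 1 * (∑ i ∈ T, w i ^ (pr * qr / (pr - qr))) ^ (1 / s2) := by
        refine mul_le_mul_of_nonneg_right hT1' ?_
        exact Real.rpow_nonneg (Finset.sum_nonneg fun i _ => Real.rpow_nonneg (hw i).le _) _
    _ = (∑ i ∈ T, w i ^ (pr * qr / (pr - qr))) ^ (1 / s2) := one_mul _


end StesinAux

open StesinAux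

/-- Stesin: for `1 ≤ q < p ≤ ∞` and positive weights `w`, with `N > m`,
`d_m(B^p_N(w), ℓ^q_N)` equals the inverse of the maximum over subsets `T ⊆ [N]` of
cardinality `N - m` of `(∑_{i ∈ T} w_i^{pq/(p-q)})^{1/p - 1/q}`; for `p = ∞` this is
interpreted as the minimum over such `T` of `(∑_{i ∈ T} w_i^q)^{1/q}`. -/
theorem statement2 {N m : ℕ} (hm : m < N) (p q : ℝ≥0∞) (hq1 : 1 ≤ q) (hqp : q < p)
    (w : Fin N → ℝ) (hw : ∀ i, 0 < w i) :
    kolWidth m (wball p w) (wnorm q (fun _ => 1)) =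
      (if p = ⊤ then
        sInf { r | ∃ T : Finset (Fin N), T.card = N - m ∧
          r = (∑ i ∈ T, w i ^ q.toReal) ^ (1 / q.toReal) }
      else
        (sSup { r | ∃ T : Finset (Fin N), T.card = N - m ∧
          r = (∑ i ∈ T, w i ^ (p.toReal * q.toReal / (p.toReal - q.toReal))) ^
                (1 / p.toReal - 1 / q.toReal) })⁻¹) := by
  classical
  haveI hFinN : Nonempty (Fin N) := ⟨⟨0, by omega⟩⟩
  have hqtop : q ≠ ⊤ := hqp.ne_top
  have hqr1 : 1 ≤ q.toReal := by
    have := ENNReal.toReal_mono hqtop hq1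
    simpa using this
  set qr := q.toReal with hqrdef
  have hqr0 : 0 < qr := lt_of_lt_of_le zero_lt_one hqr1
  have hk1 : 1 ≤ N - m := by omega
  have hkN : N - m ≤ N := by omega
  set k := N - m with hkdef
  obtain ⟨rr, hrr_top, hrr_fin⟩ : ∃ rr : ℝ, (p = ⊤ → rr = qr) ∧
      (p ≠ ⊤ → rr = p.toReal * qr / (p.toReal - qr)) :=
    ⟨if p = ⊤ then qr else p.toReal * qr / (p.toReal - qr),
      fun h => if_pos h, fun h => if_neg h⟩
  have hprq : p ≠ ⊤ → qr < p.toReal := fun hp => (ENNReal.toReal_lt_toReal hqtop hp).mpr hqp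
  have hrr0 : 0 < rr := by
    by_cases h : p = ⊤
    · rw [hrr_top h]; exact hqr0
    · rw [hrr_fin h]
      have h2 := hprq h
      have hp0 : 0 < p.toReal := lt_trans hqr0 h2
      apply div_pos (mul_pos hp0 hqr0)
      linarith
  obtain ⟨A, hA⟩ : ∃ A : Finset (Fin N) → ℝ, ∀ T, A T = ∑ i ∈ T, w i ^ rr :=
    ⟨_, fun T => rfl⟩
  obtain ⟨T₀, hT₀mem, hT₀min⟩ :=
    Finset.exists_min_image (powersetCard k (univ : Finset (Fin N))) A
      (Finset.powersetCard_nonempty.mpr (by simpa using hkN))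
  have hT₀card : #T₀ = k := (Finset.mem_powersetCard.mp hT₀mem).2
  have hApos : ∀ T : Finset (Fin N), #T = k → 0 < A T := by
    intro T hT
    have hTne : T.Nonempty := Finset.card_pos.mp (by omega)
    rw [hA]
    exact Finset.sum_pos (fun i _ => Real.rpow_pos_of_pos (hw i) _) hTne
  have hA₀pos : 0 < A T₀ := hApos T₀ hT₀card
  have hAmin : ∀ T : Finset (Fin N), #T = k → A T₀ ≤ A T := by
    intro T hT
    exact hT₀min T (Finset.mem_powersetCard.mpr ⟨Finset.subset_univ T, hT⟩)
  obtain ⟨C, hC⟩ : ∃ C : ℝ, C = A T₀ ^ (1 / rr) := ⟨_, rfl⟩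
  have hC0 : 0 < C := hC ▸ Real.rpow_pos_of_pos hA₀pos _
  have hnrm : ∀ y : Fin N → ℝ, wnorm q (fun _ => 1) y = (∑ i, |y i| ^ qr) ^ (1 / qr) := by
    intro y
    rw [wnorm, if_neg hqtop]
    simp
    rfl
  have hnrm0 : ∀ y : Fin N → ℝ, 0 ≤ wnorm q (fun _ => 1) y := by
    intro y
    rw [hnrm]
    positivity
  have hball0 : (0 : Fin N → ℝ) ∈ wball p w := by
    simp only [wball, Set.mem_setOf_eq]
    by_cases hp : p = ⊤
    · rw [wnorm, if_pos hp]
      simp only [Pi.zero_apply, abs_zero, zero_div]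
      rw [ciSup_const]
      exact zero_le_one
    · rw [wnorm, if_neg hp]
      have hp0 : 0 < p.toReal := lt_trans hqr0 (hprq hp)
      simp only [Pi.zero_apply, abs_zero, zero_div,
        Real.zero_rpow (ne_of_gt hp0), Finset.sum_const_zero]
      rw [Real.zero_rpow (one_div_ne_zero (ne_of_gt hp0))]
      exact zero_le_one
  have hsum_le : ∀ x ∈ wball p w, p ≠ ⊤ → ∑ i, (|x i| / w i) ^ p.toReal ≤ 1 := by
    intro x hx hp
    have hp0 : 0 < p.toReal := lt_trans hqr0 (hprq hp)
    have h1 : (∑ i, (|x i| / w i) ^ p.toReal) ^ (1 / p.toReal) ≤ 1 := by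
      have h2 : wnorm p w x ≤ 1 := hx
      rwa [wnorm, if_neg hp] at h2
    by_contra hcon
    push_neg at hcon
    have h2 : (1:ℝ) < (∑ i, (|x i| / w i) ^ p.toReal) ^ (1 / p.toReal) := by
      rw [Real.one_lt_rpow_iff_of_pos (lt_trans zero_lt_one hcon)]
      exact Or.inl ⟨hcon, by positivity⟩
    linarith
  have hcoord : ∀ x ∈ wball p w, ∀ i, |x i| ≤ w i := by
    intro x hx i
    by_cases hp : p = ⊤
    · have h1 : wnorm p w x ≤ 1 := hx
      rw [wnorm, if_pos hp] at h1
      have h2 : |x i| / w i ≤ 1 :=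
        le_trans (le_ciSup (f := fun j => |x j| / w j) (Set.Finite.bddAbove (Set.finite_range _)) i) h1
      exact (div_le_one (hw i)).mp h2
    · have h1 := hsum_le x hx hp
      have hp0 : 0 < p.toReal := lt_trans hqr0 (hprq hp)
      have hterm : (|x i| / w i) ^ p.toReal ≤ 1 := by
        refine le_trans ?_ h1
        exact Finset.single_le_sum (f := fun j => (|x j| / w j) ^ p.toReal)
          (fun j _ => Real.rpow_nonneg (div_nonneg (abs_nonneg _) (hw j).le) _) (mem_univ i)
      have h3 : |x i| / w i ≤ 1 := by
        by_contra hcon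
        push_neg at hcon
        have h4 : (1:ℝ) < (|x i| / w i) ^ p.toReal := by
          rw [Real.one_lt_rpow_iff_of_pos (lt_trans zero_lt_one hcon)]
          exact Or.inl ⟨hcon, hp0⟩
        linarith
      exact (div_le_one (hw i)).mp h3
  have hBd : ∀ x ∈ wball p w, wnorm q (fun _ => 1) x ≤ (∑ i, w i ^ qr) ^ (1 / qr) := by
    intro x hx
    rw [hnrm]
    refine Real.rpow_le_rpow (Finset.sum_nonneg fun i _ => Real.rpow_nonneg (abs_nonneg _) _)
      ?_ (one_div_nonneg.mpr hqr0.le)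
    refine Finset.sum_le_sum fun i _ => ?_
    exact Real.rpow_le_rpow (abs_nonneg _) (hcoord x hx i) hqr0.le
  haveI : Nonempty ↥(wball p w) := ⟨⟨0, hball0⟩⟩
  have hlow : ∀ r ∈ { r | ∃ X : Submodule ℝ (Fin N → ℝ), Module.finrank ℝ X ≤ m ∧
      r = ⨆ x : (wball p w), ⨅ z : X,
        wnorm q (fun _ => 1) ((x : Fin N → ℝ) - (z : Fin N → ℝ)) }, C ≤ r := by
    rintro r ⟨X, hX, rfl⟩
    haveI : Nonempty ↥X := ⟨0⟩
    obtain ⟨Y, hYrank, hYorth⟩ := exists_perp X hX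
    obtain ⟨u, huY, hub, T, hTcard, htight⟩ :=
      exists_tight Y k hYrank (fun i => w i ^ (rr * (1 - 1/qr)))
        (fun i => Real.rpow_pos_of_pos (hw i) _)
    obtain ⟨j0, hj0T⟩ : T.Nonempty := Finset.card_pos.mp (by omega)
    have hμj0 : 0 < w j0 ^ (rr * (1 - 1/qr)) := Real.rpow_pos_of_pos (hw j0) _
    have huj0 : 0 < |u j0| := by rw [htight j0 hj0T]; exact hμj0
    obtain ⟨p', hp'_top, hp'_fin⟩ : ∃ p' : ℝ, (p = ⊤ → p' = 1) ∧
        (p ≠ ⊤ → p' = p.toReal / (p.toReal - 1)) :=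
      ⟨if p = ⊤ then 1 else p.toReal / (p.toReal - 1), fun h => if_pos h, fun h => if_neg h⟩
    have hp'1 : 1 ≤ p' := by
      by_cases hp : p = ⊤
      · rw [hp'_top hp]
      · rw [hp'_fin hp]
        have h1 := hprq hp
        rw [le_div_iff₀ (by linarith)]
        linarith
    have hp'0 : 0 < p' := lt_of_lt_of_le zero_lt_one hp'1
    set Sa : ℝ := ∑ i, (w i * |u i|) ^ p' with hSadef
    have hSa0 : 0 < Sa := by
      refine Finset.sum_pos'
        (fun i _ => Real.rpow_nonneg (mul_nonneg (hw i).le (abs_nonneg _)) _)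
        ⟨j0, mem_univ _, ?_⟩
      exact Real.rpow_pos_of_pos (mul_pos (hw j0) huj0) _
    set Dp : ℝ := Sa ^ (1/p') with hDpdef
    have hDp0 : 0 < Dp := Real.rpow_pos_of_pos hSa0 _
    have hDpp' : Dp ^ p' = Sa := by
      rw [hDpdef, ← Real.rpow_mul hSa0.le, one_div_mul_cancel (ne_of_gt hp'0), Real.rpow_one]
    set sg : Fin N → ℝ := fun i => if u i < 0 then (-1:ℝ) else 1 with hsgdef
    have hsgu : ∀ i, sg i * u i = |u i| := by
      intro i
      simp only [hsgdef]
      by_cases h : u i < 0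
      · rw [if_pos h, abs_of_neg h]
        ring
      · rw [if_neg h, one_mul, abs_of_nonneg (not_lt.mp h)]
    set xs : Fin N → ℝ := fun i => sg i * (w i * (w i * |u i| / Dp) ^ (p' - 1)) with hxsdef
    have hxsabs : ∀ i, |xs i| = w i * (w i * |u i| / Dp) ^ (p' - 1) := by
      intro i
      rw [hxsdef]
      rw [abs_mul]
      have h1 : |sg i| = 1 := by
        rw [hsgdef]
        by_cases h : u i < 0 <;> simp [h]
      rw [h1, one_mul, abs_of_nonneg]
      exact mul_nonneg (hw i).le (Real.rpow_nonneg
        (div_nonneg (mul_nonneg (hw i).le (abs_nonneg _)) hDp0.le) _)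
    have hmemball : xs ∈ wball p w := by
      simp only [wball, Set.mem_setOf_eq]
      by_cases hp : p = ⊤
      · rw [wnorm, if_pos hp]
        refine ciSup_le fun i => ?_
        rw [hxsabs i, hp'_top hp]
        simp only [sub_self, Real.rpow_zero, mul_one]
        rw [div_self (ne_of_gt (hw i))]
      · rw [wnorm, if_neg hp]
        have hpr := hprq hp
        have hp0 : (0:ℝ) < p.toReal := lt_trans hqr0 hpr
        have hprm1 : p.toReal - 1 ≠ 0 := by linarith
        have hee : (p' - 1) * p.toReal = p' := by
          rw [hp'_fin hp]
          field_simp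
          try ring
        have hterm : ∀ i, (|xs i| / w i) ^ p.toReal = (w i * |u i|) ^ p' / Dp ^ p' := by
          intro i
          have ha0 : 0 ≤ w i * |u i| := mul_nonneg (hw i).le (abs_nonneg _)
          rw [hxsabs i, mul_div_cancel_left₀ _ (ne_of_gt (hw i)),
            ← Real.rpow_mul (div_nonneg ha0 hDp0.le), hee,
            Real.div_rpow ha0 hDp0.le]
        have hsum1 : ∑ i, (|xs i| / w i) ^ p.toReal = 1 := by
          rw [Finset.sum_congr rfl fun i _ => hterm i, ← Finset.sum_div, ← hSadef, ← hDpp',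
            div_self (ne_of_gt (by rw [hDpp']; exact hSa0))]
        rw [hsum1, Real.one_rpow]
    have hpair : ∑ i, xs i * u i = Dp := by
      have hterm : ∀ i, xs i * u i = (w i * |u i|) ^ p' / Dp ^ (p' - 1) := by
        intro i
        have h1 : xs i * u i = (w i * |u i|) * ((w i * |u i| / Dp) ^ (p' - 1)) := by
          rw [hxsdef]
          have : sg i * (w i * (w i * |u i| / Dp) ^ (p' - 1)) * u i
              = (sg i * u i) * (w i * (w i * |u i| / Dp) ^ (p' - 1)) := by ring
          rw [this, hsgu i]
          ring
        rw [h1]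
        by_cases ha : w i * |u i| = 0
        · rw [ha, zero_mul, Real.zero_rpow (ne_of_gt hp'0), zero_div]
        · have ha0 : 0 < w i * |u i| :=
            lt_of_le_of_ne (mul_nonneg (hw i).le (abs_nonneg _)) (Ne.symm ha)
          rw [Real.div_rpow ha0.le hDp0.le]
          rw [← mul_div_assoc]
          congr 1
          nth_rewrite 1 [← Real.rpow_one (w i * |u i|)]
          rw [← Real.rpow_add ha0]
          ring_nf
      rw [Finset.sum_congr rfl fun i _ => hterm i, ← Finset.sum_div, ← hSadef, ← hDpp']
      rw [← Real.rpow_sub hDp0]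
      norm_num
    -- the dual bound, in both cases for q
    have hqrne : qr ≠ 0 := ne_of_gt hqr0
    have hmain : ∃ Nq : ℝ, 0 < Nq ∧ C * Nq ≤ Dp ∧
        ∀ y : Fin N → ℝ, ∑ i, y i * u i ≤ wnorm q (fun _ => 1) y * Nq := by
      rcases eq_or_lt_of_le hqr1 with hq1' | hq1'
      · -- qr = 1
        have hμ1 : ∀ i, w i ^ (rr * (1 - 1/qr)) = 1 := by
          intro i
          rw [← hq1']
          norm_num
        have hp'rr : p' = rr := by
          by_cases hp : p = ⊤
          · rw [hp'_top hp, hrr_top hp, ← hq1']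
          · rw [hp'_fin hp, hrr_fin hp, ← hq1', mul_one]
        refine ⟨univ.sup' Finset.univ_nonempty (fun i => |u i|), ?_, ?_, ?_⟩
        · exact lt_of_lt_of_le huj0 (Finset.le_sup' (fun i => |u i|) (mem_univ j0))
        · have hMu1 : univ.sup' Finset.univ_nonempty (fun i => |u i|) ≤ 1 := by
            refine Finset.sup'_le _ _ fun i _ => ?_
            rw [← hμ1 i]
            exact hub i
          have hSaA : A T₀ ≤ Sa := by
            refine le_trans (hAmin T (by omega)) ?_
            rw [hA, hSadef]
            refine le_trans (le_of_eq (Finset.sum_congr rfl fun i hi => ?_))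
              (Finset.sum_le_sum_of_subset_of_nonneg (Finset.subset_univ T)
                (fun i _ _ => Real.rpow_nonneg (mul_nonneg (hw i).le (abs_nonneg _)) _))
            rw [htight i hi, hμ1 i, mul_one, hp'rr]
          have hCD : C ≤ Dp := by
            rw [hC, hDpdef, hp'rr]
            exact Real.rpow_le_rpow hA₀pos.le hSaA (one_div_nonneg.mpr hrr0.le)
          calc C * univ.sup' Finset.univ_nonempty (fun i => |u i|) ≤ C * 1 :=
                mul_le_mul_of_nonneg_left hMu1 hC0.le
            _ = C := mul_one _
            _ ≤ Dp := hCD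
        · intro y
          have h1 := pair_le_inf y u Finset.univ_nonempty
          refine le_trans h1 (le_of_eq ?_)
          congr 1
          rw [hnrm, ← hq1']
          simp [Real.rpow_one]
      · -- 1 < qr
        have hqm1 : qr - 1 ≠ 0 := by intro h; linarith [sub_eq_zero.mp h]
        set q' : ℝ := qr / (qr - 1) with hq'def
        have hq'0 : 0 < q' := div_pos hqr0 (by linarith)
        have hinv : 1/p' - 1/q' = 1/rr := by
          by_cases hp : p = ⊤
          · rw [hp'_top hp, hrr_top hp, hq'def]
            field_simp
            ring
          · have hpr := hprq hp
            have hp0 : (0:ℝ) < p.toReal := lt_trans hqr0 hpr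
            have h2 : p.toReal - 1 ≠ 0 := by linarith
            have h3 : p.toReal - qr ≠ 0 := by linarith
            rw [hp'_fin hp, hrr_fin hp, hq'def]
            field_simp
            ring
        have hpq' : p' ≤ q' := by
          by_cases hp : p = ⊤
          · rw [hp'_top hp, hq'def, le_div_iff₀ (by linarith)]
            linarith
          · have hpr := hprq hp
            rw [hp'_fin hp, hq'def, div_le_div_iff₀ (by linarith) (by linarith)]
            nlinarith
        have hexpμ : rr * (1 - 1/qr) = rr / q' := by
          rw [hq'def]
          field_simp
          try ring
        have hub' : ∀ i, |u i| ≤ w i ^ (rr / q') := by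
          intro i
          rw [← hexpμ]
          exact hub i
        have htight' : ∀ i ∈ T, |u i| = w i ^ (rr / q') := by
          intro i hi
          rw [← hexpμ]
          exact htight i hi
        have hAT : A T₀ ≤ ∑ i ∈ T, w i ^ rr :=
          le_of_le_of_eq (hAmin T (by omega)) (hA T)
        have key := key_ineq w u hw p' q' rr (A T₀) hp'1 hpq' hrr0 hinv hub' T htight'
          hA₀pos.le hAT
        refine ⟨(∑ i, |u i| ^ q') ^ (1/q'), ?_, ?_, ?_⟩
        · refine Real.rpow_pos_of_pos ?_ _
          refine Finset.sum_pos' (fun i _ => Real.rpow_nonneg (abs_nonneg _) _)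
            ⟨j0, mem_univ _, Real.rpow_pos_of_pos huj0 _⟩
        · rw [hC]
          exact key
        · intro y
          have h1 := pair_le qr q' hq1' hq'def y u
          rw [hnrm]
          exact h1
    obtain ⟨Nq, hNq0, hkey, hHold⟩ := hmain
    have hdist : ∀ z ∈ X, C ≤ wnorm q (fun _ => 1) (xs - z) := by
      intro z hz
      have h1 : ∑ i, (xs i - z i) * u i = Dp := by
        have e1 : ∑ i, (xs i - z i) * u i = ∑ i, xs i * u i - ∑ i, z i * u i := by
          rw [← Finset.sum_sub_distrib]
          exact Finset.sum_congr rfl fun i _ => by ring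
        have e2 : ∑ i, z i * u i = 0 := by
          rw [← hYorth u huY z hz]
          exact Finset.sum_congr rfl fun i _ => mul_comm _ _
        rw [e1, e2, sub_zero, hpair]
      have h2 := hHold (xs - z)
      simp only [Pi.sub_apply] at h2
      rw [h1] at h2
      exact le_of_mul_le_mul_right (le_trans hkey h2) hNq0
    refine le_ciSup_of_le ?_ (⟨xs, hmemball⟩ : (wball p w)) ?_
    · refine ⟨(∑ i, w i ^ qr) ^ (1/qr), ?_⟩
      rintro y ⟨x, rfl⟩
      refine le_trans (ciInf_le ⟨0, ?_⟩ (⟨0, X.zero_mem⟩ : X)) ?_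
      · rintro y' ⟨z', rfl⟩
        exact hnrm0 _
      · have e3 : ((x : Fin N → ℝ) - (((⟨0, X.zero_mem⟩ : X) : Fin N → ℝ)))
            = (x : Fin N → ℝ) := by simp
        rw [e3]
        exact hBd x x.2
    · exact le_ciInf fun z => hdist z.1 z.2
  have hup : ∃ r₀ ∈ { r | ∃ X : Submodule ℝ (Fin N → ℝ), Module.finrank ℝ X ≤ m ∧
      r = ⨆ x : (wball p w), ⨅ z : X,
        wnorm q (fun _ => 1) ((x : Fin N → ℝ) - (z : Fin N → ℝ)) }, r₀ ≤ C := by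
    set gens : Finset (Fin N → ℝ) := T₀ᶜ.image (fun i => Pi.single i (1:ℝ)) with hgens
    set X₀ : Submodule ℝ (Fin N → ℝ) := Submodule.span ℝ (gens : Set (Fin N → ℝ)) with hX₀
    have hX₀rank : Module.finrank ℝ X₀ ≤ m := by
      refine le_trans (finrank_span_finset_le_card gens) ?_
      refine le_trans (Finset.card_image_le) ?_
      rw [Finset.card_compl, hT₀card, Fintype.card_fin]
      omega
    refine ⟨_, ⟨X₀, hX₀rank, rfl⟩, ?_⟩
    refine ciSup_le ?_
    rintro ⟨x, hx⟩
    have hzmem : (fun i => if i ∈ T₀ then 0 else x i) ∈ X₀ := by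
      have hz2 : (fun i => if i ∈ T₀ then 0 else x i)
          = ∑ i ∈ T₀ᶜ, x i • (Pi.single i 1 : Fin N → ℝ) := by
        funext j
        rw [Finset.sum_apply]
        by_cases hj : j ∈ T₀
        · simp only [hj, if_pos]
          symm
          refine Finset.sum_eq_zero fun i hi => ?_
          have hne : j ≠ i := by
            intro h
            exact (Finset.mem_compl.mp hi) (h ▸ hj)
          simp [Pi.single_apply, hne]
        · have hjc : j ∈ T₀ᶜ := Finset.mem_compl.mpr hj
          rw [Finset.sum_eq_single_of_mem j hjc]
          · simp [hj, Pi.single_apply]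
          · intro i hi hne
            simp [Pi.single_apply, (Ne.symm hne : j ≠ i)]
      rw [hz2]
      exact Submodule.sum_mem _ fun i hi => Submodule.smul_mem _ _
        (Submodule.subset_span (Finset.mem_coe.mpr (Finset.mem_image_of_mem _ hi)))
    haveI : Nonempty ↥X₀ := ⟨0⟩
    refine le_trans (ciInf_le ⟨0, ?_⟩ (⟨_, hzmem⟩ : X₀)) ?_
    · rintro y ⟨z', rfl⟩
      exact hnrm0 _
    rw [hnrm]
    have hsum : ∑ i, |(x - fun i => if i ∈ T₀ then 0 else x i) i| ^ qr
        = ∑ i ∈ T₀, |x i| ^ qr := by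
      rw [← Finset.sum_add_sum_compl T₀]
      have e1 : ∑ i ∈ T₀, |(x - fun i => if i ∈ T₀ then 0 else x i) i| ^ qr
          = ∑ i ∈ T₀, |x i| ^ qr := by
        refine Finset.sum_congr rfl fun i hi => ?_
        simp [hi]
      have e2 : ∑ i ∈ T₀ᶜ, |(x - fun i => if i ∈ T₀ then 0 else x i) i| ^ qr = 0 := by
        refine Finset.sum_eq_zero fun i hi => ?_
        have hi' : i ∉ T₀ := Finset.mem_compl.mp hi
        simp [hi', Real.zero_rpow (ne_of_gt hqr0)]
      rw [e1, e2, add_zero]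
    rw [hsum]
    have hsumnn : 0 ≤ ∑ i ∈ T₀, |x i| ^ qr :=
      Finset.sum_nonneg fun i _ => Real.rpow_nonneg (abs_nonneg _) _
    by_cases hp : p = ⊤
    · have hrrq := hrr_top hp
      have hb : ∑ i ∈ T₀, |x i| ^ qr ≤ A T₀ := by
        rw [hA]
        refine Finset.sum_le_sum fun i hi => ?_
        rw [hrrq]
        exact Real.rpow_le_rpow (abs_nonneg _) (hcoord x hx i) hqr0.le
      calc (∑ i ∈ T₀, |x i| ^ qr) ^ (1/qr) ≤ (A T₀) ^ (1/qr) :=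
            Real.rpow_le_rpow hsumnn hb (one_div_nonneg.mpr hqr0.le)
        _ = C := by rw [hC, hrrq]
    · have hpr := hprq hp
      have hp0 : (0:ℝ) < p.toReal := lt_trans hqr0 hpr
      have hhold := upper_holder w x hw p.toReal qr hqr1 hpr (hsum_le x hx hp) T₀
      have hbA : (∑ i ∈ T₀, w i ^ (p.toReal * qr / (p.toReal - qr))) = A T₀ := by
        rw [hA, hrr_fin hp]
      rw [hbA] at hhold
      calc (∑ i ∈ T₀, |x i| ^ qr) ^ (1/qr)
          ≤ ((A T₀) ^ ((p.toReal - qr)/p.toReal)) ^ (1/qr) :=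
            Real.rpow_le_rpow hsumnn hhold (one_div_nonneg.mpr hqr0.le)
        _ = C := by
            rw [← Real.rpow_mul hA₀pos.le, hC, hrr_fin hp]
            congr 1
            have h1 : p.toReal - qr ≠ 0 := by linarith
            field_simp
            try ring
  obtain ⟨r₀, hr₀S, hr₀C⟩ := hup
  have hwidth : kolWidth m (wball p w) (wnorm q (fun _ => 1)) = C := by
    rw [kolWidth]
    exact le_antisymm (le_trans (csInf_le ⟨C, hlow⟩ hr₀S) hr₀C) (le_csInf ⟨r₀, hr₀S⟩ hlow)
  rw [hwidth]
  by_cases hp : p = ⊤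
  · rw [if_pos hp]
    have hrrq : rr = qr := hrr_top hp
    subst hrrq
    have hmem : C = (∑ i ∈ T₀, w i ^ qr) ^ (1 / qr) := by rw [hC, hA]
    refine le_antisymm ?_ ?_
    · refine le_csInf ⟨C, T₀, by omega, hmem⟩ ?_
      rintro r ⟨T, hT, rfl⟩
      rw [hC]
      refine Real.rpow_le_rpow hA₀pos.le ?_ (one_div_nonneg.mpr hqr0.le)
      exact le_of_le_of_eq (hAmin T (by omega)) (hA T)
    · refine csInf_le ⟨0, ?_⟩ ⟨T₀, by omega, hmem⟩
      rintro r ⟨T, hT, rfl⟩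
      exact Real.rpow_nonneg (Finset.sum_nonneg fun i _ => Real.rpow_nonneg (hw i).le _) _
  · rw [if_neg hp]
    have hrrval : rr = p.toReal * qr / (p.toReal - qr) := hrr_fin hp
    have hprq2 := hprq hp
    have hp0 : (0:ℝ) < p.toReal := lt_trans hqr0 hprq2
    have hexp : ∀ T : Finset (Fin N),
        (∑ i ∈ T, w i ^ (p.toReal * qr / (p.toReal - qr))) ^ (1 / p.toReal - 1 / qr)
          = ((A T) ^ (1 / rr))⁻¹ := by
      intro T
      have h1 : (1 : ℝ) / p.toReal - 1 / qr = -(1 / rr) := by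
        rw [hrrval]
        have hne : p.toReal - qr ≠ 0 := by linarith
        field_simp
        try ring
      rw [h1, Real.rpow_neg (Finset.sum_nonneg fun i _ => Real.rpow_nonneg (hw i).le _)]
      rw [hA, hrrval]
    have hAle : ∀ T : Finset (Fin N), #T = N - m →
        ((A T) ^ (1 / rr))⁻¹ ≤ C⁻¹ := by
      intro T hT
      rw [hC]
      refine inv_anti₀ (Real.rpow_pos_of_pos hA₀pos _) ?_
      exact Real.rpow_le_rpow hA₀pos.le (hAmin T (by omega)) (one_div_nonneg.mpr hrr0.le)
    have hCmem : C⁻¹ = (∑ i ∈ T₀, w i ^ (p.toReal * qr / (p.toReal - qr))) ^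
        (1 / p.toReal - 1 / qr) := by rw [hexp T₀, hC]
    have hsup : sSup { r | ∃ T : Finset (Fin N), #T = N - m ∧
        r = (∑ i ∈ T, w i ^ (p.toReal * qr / (p.toReal - qr))) ^ (1 / p.toReal - 1 / qr) }
        = C⁻¹ := by
      refine le_antisymm ?_ ?_
      · refine csSup_le ⟨C⁻¹, T₀, by omega, hCmem⟩ ?_
        rintro r ⟨T, hT, rfl⟩
        rw [hexp T]
        exact hAle T hT
      · refine le_csSup ⟨C⁻¹, ?_⟩ ⟨T₀, by omega, hCmem⟩
        rintro r ⟨T, hT, rfl⟩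
        rw [hexp T]
        exact hAle T hT
    rw [hsup, inv_inv]

end
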